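/- Let (A,‖·‖) be a commutative unital complex normed algebra whose norm ‖·‖ is a uniform norm, such that (A,‖·‖) is a Q-algebra and (A,‖·‖) is regular. If |·| is any uniform norm on A, then the set of |·|-continuous nonzero multiplicative linear functionals on A equals the set of ‖·‖-continuous nonzero multiplicative linear functionals on A, i.e. M(A,|·|) = M(A,‖·‖). -/

import Mathlib

/-- `x` is quasi-invertible: there is `y` with `x ∘ y = y ∘ x = 0`
where `x ∘ y = x + y - x*y`. -/
def IsQuasiInv {A : Type*} [Ring A] (x : A) : Prop :=
  ∃ y, x + y - x * y = 0 ∧ y + x - y * x = 0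

/-- `S` is open in the topology induced by the norm `N`. -/
def NormOpen {A : Type*} [AddGroup A] (N : A → ℝ) (S : Set A) : Prop :=
  ∀ x ∈ S, ∃ ε > 0, ∀ y, N (y - x) < ε → y ∈ S

/-- A uniform norm: a submultiplicative norm satisfying the square property. -/
structure IsUniformNorm {A : Type*} [Ring A] [Module ℂ A] (N : A → ℝ) : Prop where
  eq_zero_iff : ∀ x, N x = 0 ↔ x = 0
  add_le : ∀ x y, N (x + y) ≤ N x + N y
  smul_eq : ∀ (c : ℂ) (x : A), N (c • x) = ‖c‖ * N x
  mul_le : ∀ x y, N (x * y) ≤ N x * N y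
  sq_eq : ∀ x, N (x * x) = N x * N x

/-- `M(A, N)`: the nonzero multiplicative linear functionals on `A` that are
continuous (i.e. bounded) with respect to the norm `N`. -/
def MSpec {A : Type*} [Ring A] [Module ℂ A] (N : A → ℝ) : Set (A → ℂ) :=
  {f | (∀ x y, f (x + y) = f x + f y) ∧ (∀ (c : ℂ) (x : A), f (c • x) = c * f x) ∧
       (∀ x y, f (x * y) = f x * f y) ∧ f ≠ 0 ∧ (∃ C : ℝ, ∀ x, ‖f x‖ ≤ C * N x)}

/-- `(A, N)` is regular: for every subset `F` of `M(A,N)` that is closed in the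
weak-* (pointwise convergence) topology and every `f₁ ∈ M(A,N) \ F` there is
`x ∈ A` vanishing on `F` with `f₁ x ≠ 0`. -/
def RegularWrt {A : Type*} [Ring A] [Module ℂ A] (N : A → ℝ) : Prop :=
  ∀ F : Set (A → ℂ), F ⊆ MSpec N →
    IsClosed {g : ↥(MSpec N) | (g : A → ℂ) ∈ F} →
    ∀ f₁ ∈ MSpec N, f₁ ∉ F → ∃ x : A, (∀ f ∈ F, f x = 0) ∧ f₁ x ≠ 0

section Aux

open Filter UniformSpace
open scoped ENNReal NNReal Topology

variable {A : Type*} [CommRing A] [Algebra ℂ A]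

theorem IsUniformNorm.neg_eq {q : A → ℝ} (hq : IsUniformNorm q) (x : A) : q (-x) = q x := by
  have h := hq.smul_eq (-1 : ℂ) x
  rw [neg_one_smul] at h
  simpa using h

theorem IsUniformNorm.nonneg {q : A → ℝ} (hq : IsUniformNorm q) (x : A) : 0 ≤ q x := by
  have h0 : q 0 = 0 := (hq.eq_zero_iff 0).mpr rfl
  have h := hq.add_le x (-x)
  rw [add_neg_cancel, h0, hq.neg_eq] at h
  linarith

theorem IsUniformNorm.pow_two_pow {q : A → ℝ} (hq : IsUniformNorm q) (x : A) (n : ℕ) :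
    q (x ^ (2 ^ n)) = q x ^ (2 ^ n) := by
  induction n with
  | zero => simp
  | succ n ih =>
    have h2 : (2 : ℕ) ^ (n + 1) = 2 ^ n + 2 ^ n := by ring
    rw [h2, pow_add, pow_add, hq.sq_eq, ih]

theorem map_pow_two_pow {f : A → ℂ} (hmul : ∀ x y, f (x * y) = f x * f y) (x : A) (n : ℕ) :
    f (x ^ (2 ^ n)) = f x ^ (2 ^ n) := by
  induction n with
  | zero => simp
  | succ n ih =>
    have h2 : (2 : ℕ) ^ (n + 1) = 2 ^ n + 2 ^ n := by ring
    rw [h2, pow_add, pow_add, hmul, ih]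

/-- For a uniform norm, any `q`-bounded multiplicative functional is `q`-contractive. -/
theorem norm_le_of_bound {q : A → ℝ} (hq : IsUniformNorm q) {f : A → ℂ}
    (hmul : ∀ x y, f (x * y) = f x * f y) {C : ℝ} (hC : ∀ x, ‖f x‖ ≤ C * q x) (x : A) :
    ‖f x‖ ≤ q x := by
  by_contra h
  push_neg at h
  have hqx : 0 ≤ q x := hq.nonneg x
  have hfx : 0 < ‖f x‖ := lt_of_le_of_lt hqx h
  rcases eq_or_lt_of_le hqx with h0 | h0
  · have hb := hC x
    rw [← h0, mul_zero] at hb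
    exact absurd hb (not_le.mpr hfx)
  · set r : ℝ := ‖f x‖ / q x with hr
    have hr1 : 1 < r := (one_lt_div h0).mpr h
    obtain ⟨n, hn⟩ := pow_unbounded_of_one_lt C hr1
    have hb : ‖f x‖ ^ (2 ^ n) ≤ C * q x ^ (2 ^ n) := by
      have hb' := hC (x ^ (2 ^ n))
      rw [hq.pow_two_pow, map_pow_two_pow hmul, norm_pow] at hb'
      exact hb'
    have h1 : r ^ (2 ^ n) ≤ C := by
      rw [hr, div_pow, div_le_iff₀ (pow_pos h0 _)]
      linarith [hb]
    have h2 : r ^ n ≤ r ^ (2 ^ n) := pow_le_pow_right₀ hr1.le (Nat.lt_two_pow_self (n := n)).le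
    linarith

/-- In a Q-algebra, every multiplicative linear functional is bounded. -/
theorem bound_of_qalg {N : A → ℝ} (hN : IsUniformNorm N)
    (hQ : NormOpen N {x | IsQuasiInv x}) {f : A → ℂ}
    (hadd : ∀ x y, f (x + y) = f x + f y)
    (hsmul : ∀ (c : ℂ) (x : A), f (c • x) = c * f x)
    (hmul : ∀ x y, f (x * y) = f x * f y) :
    ∃ C : ℝ, ∀ x, ‖f x‖ ≤ C * N x := by
  have h0 : (0 : A) ∈ {x : A | IsQuasiInv x} := ⟨0, by simp, by simp⟩
  obtain ⟨ε, hε, hball⟩ := hQ 0 h0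
  have hf0 : f 0 = 0 := by
    have h := hadd 0 0
    rw [add_zero] at h
    have h' : f 0 + f 0 = f 0 + 0 := by rw [add_zero]; exact h.symm
    exact add_left_cancel h'
  have hfsub : ∀ a b : A, f (a - b) = f a - f b := by
    intro a b
    have h := hadd (a - b) b
    rw [sub_add_cancel] at h
    exact eq_sub_of_add_eq h.symm
  refine ⟨2 / ε, fun x => ?_⟩
  by_contra hcon
  push_neg at hcon
  have hNx : 0 ≤ N x := hN.nonneg x
  have hC0 : 0 ≤ 2 / ε := div_nonneg (by norm_num) hε.le
  have hfx0 : f x ≠ 0 := by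
    intro hz
    rw [hz, norm_zero] at hcon
    nlinarith
  set y : A := (f x)⁻¹ • x with hy
  have hNy : N y < ε := by
    rw [hy, hN.smul_eq, norm_inv]
    rcases eq_or_lt_of_le hNx with h0' | h0'
    · rw [← h0', mul_zero]; exact hε
    · have hfxpos : (0:ℝ) < ‖f x‖ := norm_pos_iff.mpr hfx0
      have hcon2 : 2 * N x < ‖f x‖ * ε := by
        rw [div_mul_eq_mul_div] at hcon
        exact (div_lt_iff₀ hε).mp hcon
      rw [mul_comm, ← div_eq_mul_inv, div_lt_iff₀ hfxpos]
      linarith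
  have hyq : IsQuasiInv y := hball y (by rw [sub_zero]; exact hNy)
  obtain ⟨z, hz1, _⟩ := hyq
  have hfy : f y = 1 := by
    rw [hy, hsmul, inv_mul_cancel₀ hfx0]
  have : (1 : ℂ) = 0 := by
    have h := congrArg f hz1
    rw [hfsub, hadd, hmul, hfy, hf0] at h
    simpa using h
  exact one_ne_zero this

/-- Key lemma: for a uniform norm `q` and `x ≠ 0` there is a `q`-continuous character
not vanishing at `x`.  Proved via the Gelfand theory of the completion of `(A, q)`. -/
theorem exists_char_of_uniformNorm {q : A → ℝ} (hq : IsUniformNorm q) {x : A} (hx : x ≠ 0) :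
    ∃ g ∈ MSpec q, g x ≠ 0 := by
  classical
  have hone : (1 : A) ≠ 0 := fun h => hx (by rw [← mul_one x, h, mul_zero])
  letI : NormedAddCommGroup A := AddGroupNorm.toNormedAddCommGroup
    { toFun := q
      map_zero' := (hq.eq_zero_iff 0).mpr rfl
      add_le' := hq.add_le
      neg' := hq.neg_eq
      eq_zero_of_map_eq_zero' := fun y h => (hq.eq_zero_iff y).mp h }
  letI : NormedCommRing A :=
    { ‹NormedAddCommGroup A›, ‹CommRing A› with
      norm_mul_le := fun a b => by
        change q (a * b) ≤ q a * q b
        exact hq.mul_le a b }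
  letI : NormedAlgebra ℂ A :=
    { ‹Algebra ℂ A› with
      norm_smul_le := fun c y => le_of_eq (hq.smul_eq c y) }
  have hq1 : q 1 = 1 := by
    have h := hq.sq_eq 1
    rw [one_mul] at h
    have hne : q 1 ≠ 0 := fun h0 => hone ((hq.eq_zero_iff 1).mp h0)
    exact (mul_left_cancel₀ hne (by rw [mul_one]; exact h)).symm
  letI : NormOneClass A := ⟨hq1⟩
  letI : NormOneClass (Completion A) :=
    ⟨by rw [← UniformSpace.Completion.coe_one, UniformSpace.Completion.norm_coe]; exact hq1⟩
  haveI : Nontrivial (Completion A) := ⟨⟨(x : Completion A), 0, by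
    rw [← UniformSpace.Completion.coe_zero]
    exact fun h => hx (UniformSpace.Completion.coe_injective A h)⟩⟩
  set a : Completion A := (x : Completion A) with ha
  have hcoe_pow : ∀ m : ℕ, ((x ^ m : A) : Completion A) = a ^ m := fun m =>
    map_pow (UniformSpace.Completion.coeRingHom) x m
  have hpow : ∀ k : ℕ, ‖a ^ (2 ^ k)‖₊ = ‖x‖₊ ^ (2 ^ k) := by
    intro k
    rw [← hcoe_pow, UniformSpace.Completion.nnnorm_coe]
    ext
    push_cast
    exact hq.pow_two_pow x k
  have hxq : ‖x‖₊ ≠ 0 := by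
    simpa using hx
  -- Gelfand's formula along the subsequence `2 ^ k` shows the spectral radius is `‖x‖₊`.
  have htend := (spectrum.pow_nnnorm_pow_one_div_tendsto_nhds_spectralRadius a).comp
    (tendsto_pow_atTop_atTop_of_one_lt (one_lt_two))
  have hconst : (fun k : ℕ => ((‖a ^ (2 ^ k)‖₊ : ℝ≥0∞) ^ (1 / ((2:ℕ) ^ k : ℕ) : ℝ)))
      = fun _ : ℕ => (‖x‖₊ : ℝ≥0∞) := by
    funext k
    rw [hpow k]
    have h2k : ((2:ℕ) ^ k : ℝ) ≠ 0 := by positivity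
    rw [ENNReal.coe_pow, ← ENNReal.rpow_natCast ((‖x‖₊ : ℝ≥0∞)) (2 ^ k),
      ← ENNReal.rpow_mul]
    rw [show (((2:ℕ) ^ k : ℕ) : ℝ) * (1 / ((2:ℕ) ^ k : ℕ) : ℝ) = 1 by
      field_simp]
    exact ENNReal.rpow_one _
  rw [show ((fun n : ℕ => (‖a ^ n‖₊ : ℝ≥0∞) ^ (1 / n : ℝ)) ∘ fun k : ℕ => 2 ^ k)
      = fun k : ℕ => ((‖a ^ (2 ^ k)‖₊ : ℝ≥0∞) ^ (1 / ((2:ℕ) ^ k : ℕ) : ℝ)) from rfl,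
    hconst] at htend
  have hrad : spectralRadius ℂ a = (‖x‖₊ : ℝ≥0∞) := by
    have := tendsto_nhds_unique htend tendsto_const_nhds
    first
    | exact this
    | exact this.symm
  -- Find a character of the completion not vanishing at `a`.
  obtain ⟨f, hf⟩ : ∃ f : WeakDual.characterSpace ℂ (Completion A), f a ≠ 0 := by
    by_contra hall
    push_neg at hall
    have hle : spectralRadius ℂ a ≤ 0 := by
      rw [spectralRadius]
      refine iSup₂_le fun z hz => ?_
      obtain ⟨f, hfz⟩ := WeakDual.CharacterSpace.mem_spectrum_iff_exists.mp hz
      rw [← hfz, hall f]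
      simp
    rw [hrad] at hle
    exact hxq (by simpa using le_antisymm hle (zero_le'))
  refine ⟨fun y => f ((y : A) : Completion A), ⟨?_, ?_, ?_, ?_, ⟨1, ?_⟩⟩, hf⟩
  · intro u v
    simp only [UniformSpace.Completion.coe_add, map_add]
  · intro c u
    simp only [UniformSpace.Completion.coe_smul, map_smul, smul_eq_mul]
  · intro u v
    simp only [UniformSpace.Completion.coe_mul, map_mul]
  · intro h
    exact hf (congrFun h x)
  · intro y
    rw [one_mul]
    calc ‖f ((y : A) : Completion A)‖ ≤ ‖((y : A) : Completion A)‖ :=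
          spectrum.norm_le_norm_of_mem (AlgHom.apply_mem_spectrum f _)
      _ = ‖y‖ := UniformSpace.Completion.norm_coe y
      _ = q y := rfl

end Aux

/-- For a regular uniform normed Q-algebra `(A, N)` with unit and any uniform
norm `q` on `A`, the `q`-continuous nonzero multiplicative linear functionals
coincide with the `N`-continuous ones: `M(A,q) = M(A,N)`. -/
theorem mSpec_eq_of_regular {A : Type*} [CommRing A] [Algebra ℂ A]
    (N : A → ℝ) (hN : IsUniformNorm N)
    (hQ : NormOpen N {x | IsQuasiInv x})
    (hreg : RegularWrt N)
    (q : A → ℝ) (hq : IsUniformNorm q) :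
    MSpec q = MSpec N := by
  -- `MSpec q ⊆ MSpec N` since `(A, N)` is a Q-algebra.
  have hsub : MSpec q ⊆ MSpec N := by
    rintro f ⟨hadd, hsmul, hmul, hne, -⟩
    exact ⟨hadd, hsmul, hmul, hne, bound_of_qalg hN hQ hadd hsmul hmul⟩
  refine Set.Subset.antisymm hsub fun f₁ hf₁ => ?_
  by_contra hf₁q
  -- `MSpec q` is a weak-* closed subset of `MSpec N`.
  have hclosed : IsClosed {g : ↥(MSpec N) | (g : A → ℂ) ∈ MSpec q} := by
    have heq : {g : ↥(MSpec N) | (g : A → ℂ) ∈ MSpec q}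
        = ⋂ x : A, {g : ↥(MSpec N) | ‖(g : A → ℂ) x‖ ≤ q x} := by
      ext g
      simp only [Set.mem_setOf_eq, Set.mem_iInter]
      constructor
      · rintro ⟨hadd, hsmul, hmul, hne, C, hC⟩ x
        exact norm_le_of_bound hq hmul hC x
      · intro hb
        obtain ⟨hadd, hsmul, hmul, hne, -⟩ := g.2
        exact ⟨hadd, hsmul, hmul, hne, 1, fun x => by rw [one_mul]; exact hb x⟩
    rw [heq]
    exact isClosed_iInter fun x => isClosed_le
      (Continuous.norm ((continuous_apply x).comp continuous_subtype_val)) continuous_const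
  -- Apply regularity to `F = MSpec q` and `f₁`.
  obtain ⟨x, hvan, hne⟩ := hreg (MSpec q) hsub hclosed f₁ hf₁ hf₁q
  have hx : x ≠ 0 := by
    rintro rfl
    obtain ⟨hadd, -, -, -, -⟩ := hf₁
    have h := hadd 0 0
    rw [add_zero] at h
    have h' : f₁ 0 + f₁ 0 = f₁ 0 + 0 := by rw [add_zero]; exact h.symm
    exact hne (add_left_cancel h')
  obtain ⟨g, hg, hgx⟩ := exists_char_of_uniformNorm hq hx
  exact hgx (hvan g hg)
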